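/- Let P be a poset of infinite cardinality κ. If the order of P is the intersection of fewer than cf(κ) Jónsson orders on the same underlying set, then P is Jónsson. -/

import Mathlib

open Cardinal

/-- A relation `r` on `α` is Jónsson if `α` is infinite and every proper
initial segment (downward-closed set w.r.t. `r`) has cardinality `< #α`. -/
def JonssonRel {α : Type*} (r : α → α → Prop) : Prop :=
  Infinite α ∧ ∀ A : Set α, (∀ x ∈ A, ∀ y, r y x → y ∈ A) →
    A ≠ Set.univ → #A < #α

universe u

theorem stmt4 {α : Type u} [PartialOrder α] [Infinite α]
    {ι : Type u} (r : ι → α → α → Prop)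
    (hpo : ∀ i, IsPartialOrder α (r i))
    (hj : ∀ i, JonssonRel (r i))
    (hcard : #ι < (#α).ord.cof)
    (hinter : ∀ x y : α, x ≤ y ↔ ∀ i, r i x y) :
    JonssonRel (fun x y : α => x ≤ y) := by
  refine ⟨‹Infinite α›, fun A hA hAne => ?_⟩
  obtain ⟨b, hb⟩ : ∃ b, b ∉ A := by
    by_contra h; push_neg at h; exact hAne (Set.eq_univ_of_forall h)
  set C : ι → Set α := fun i => {a | a ∈ A ∧ ¬ r i b a} with hCdef
  have hcover : A ⊆ ⋃ i, C i := by
    intro a ha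
    have hba : ¬ b ≤ a := fun h => hb (hA a ha b h)
    rw [hinter] at hba
    push_neg at hba
    obtain ⟨i, hi⟩ := hba
    exact Set.mem_iUnion.2 ⟨i, ha, hi⟩
  have hD : ∀ i, #(C i) < #α := by
    intro i
    set D : Set α := {x | ∃ a ∈ C i, r i x a} with hDdef
    have hsub : C i ⊆ D := fun a ha => ⟨a, ha, (hpo i).refl a⟩
    have hinit : ∀ x ∈ D, ∀ y, r i y x → y ∈ D := by
      rintro x ⟨a, ha, hxa⟩ y hyx
      exact ⟨a, ha, (hpo i).trans _ _ _ hyx hxa⟩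
    have hne : D ≠ Set.univ := by
      intro h
      have hbD : b ∈ D := h ▸ Set.mem_univ b
      obtain ⟨a, ha, hba⟩ := hbD
      exact ha.2 hba
    exact lt_of_le_of_lt (Cardinal.mk_le_mk_of_subset hsub) ((hj i).2 D hinit hne)
  calc #A ≤ #(⋃ i, C i) := Cardinal.mk_le_mk_of_subset hcover
    _ ≤ Cardinal.sum (fun i => #(C i)) := Cardinal.mk_iUnion_le_sum_mk
    _ ≤ #ι * ⨆ i, #(C i) := Cardinal.sum_le_mk_mul_iSup _
    _ < #α := Cardinal.mul_lt_of_lt (Cardinal.aleph0_le_mk α)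
        (hcard.trans_le (Ordinal.cof_ord_le _)) (Ordinal.iSup_lt hcard hD)
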